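/- Given 1 ≤ p ≤ q, suppose A ∈ ℂ^{m×N} satisfies the ℓ^q-robust null space property of order s with constants 0 < ρ < 1 and τ > 0 relative to a norm ‖·‖ on ℂ^m. Then for any z, w ∈ ℂ^N, ‖z − w‖_p ≤ (C/s^(1−1/p)) (‖z‖_1 − ‖w‖_1 + 2σ_s(w)_1) + (D/s^(1/q−1/p)) ‖A(z−w)‖, where C = (1+ρ)²/(1−ρ) and D = (3+ρ)τ/(1−ρ). -/

import Mathlib

noncomputable def lpNorm {n : ℕ} (p : ℝ) (x : Fin n → ℂ) : ℝ :=
  (∑ i, ‖x i‖ ^ p) ^ (1 / p)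

/-- Best `s`-term approximation error of `x` in the `ℓ^1` norm. -/
noncomputable def bestApprox1 {n : ℕ} (s : ℕ) (x : Fin n → ℂ) : ℝ :=
  sInf ((fun w => lpNorm 1 (x - w)) ''
    {w : Fin n → ℂ | ∃ S : Finset (Fin n), S.card ≤ s ∧ ∀ i ∉ S, w i = 0})

/-- Restriction of `z` to the coordinates in `S` (zero elsewhere). -/
def restrictTo {n : ℕ} (S : Finset (Fin n)) (z : Fin n → ℂ) : Fin n → ℂ :=
  fun i => if i ∈ S then z i else 0

/-- `ℓ^q`-robust null space property of order `s` with constants `ρ, τ` relative to the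
norm `nn` on `ℂ^m`. -/
def RNSP {m N : ℕ} (A : Matrix (Fin m) (Fin N) ℂ) (nn : (Fin m → ℂ) → ℝ)
    (q : ℝ) (s : ℕ) (ρ τ : ℝ) : Prop :=
  ∀ S : Finset (Fin N), S.card ≤ s → ∀ v : Fin N → ℂ,
    lpNorm q (restrictTo S v) ≤
      (s : ℝ) ^ (1 / q - 1) * ρ * lpNorm 1 (restrictTo Sᶜ v) + τ * nn (A.mulVec v)

open Finset in
lemma lp1_eq {n : ℕ} (x : Fin n → ℂ) : lpNorm 1 x = ∑ i, ‖x i‖ := by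
  simp [lpNorm]

open Finset in
lemma sum_restrict_rpow {n : ℕ} (S : Finset (Fin n)) (v : Fin n → ℂ) {p : ℝ} (hp : p ≠ 0) :
    ∑ i, ‖restrictTo S v i‖ ^ p = ∑ i ∈ S, ‖v i‖ ^ p := by
  rw [← Finset.sum_subset (Finset.subset_univ S)]
  · exact Finset.sum_congr rfl fun i hi => by simp [restrictTo, hi]
  · intro i _ hi
    simp [restrictTo, hi, Real.zero_rpow hp]

open Finset in
lemma lp_restrict {n : ℕ} (S : Finset (Fin n)) (v : Fin n → ℂ) {p : ℝ} (hp : p ≠ 0) :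
    lpNorm p (restrictTo S v) = (∑ i ∈ S, ‖v i‖ ^ p) ^ (1/p) := by
  rw [lpNorm, sum_restrict_rpow S v hp]

lemma lp1_restrict {n : ℕ} (S : Finset (Fin n)) (v : Fin n → ℂ) :
    lpNorm 1 (restrictTo S v) = ∑ i ∈ S, ‖v i‖ := by
  rw [lp_restrict S v one_ne_zero]
  simp

/-- Hölder-type estimate relating `ℓ^r` and `ℓ^t` norms on a finite set. -/
lemma holder_card {ι : Type*} (S : Finset ι) (f : ι → ℝ) (hf : ∀ i, 0 ≤ f i)
    {r t : ℝ} (hr : 0 < r) (hrt : r ≤ t) :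
    (∑ i ∈ S, f i ^ r) ^ (1/r) ≤ (S.card : ℝ) ^ (1/r - 1/t) * (∑ i ∈ S, f i ^ t) ^ (1/t) := by
  rcases eq_or_lt_of_le hrt with h | h
  · subst h
    simp
  have ht : 0 < t := hr.trans h
  set P := t / r with hP
  have hP1 : 1 < P := (one_lt_div hr).2 h
  have hQ : Real.HolderConjugate P (P / (P - 1)) := Real.HolderConjugate.conjExponent hP1
  have key : ∑ i ∈ S, f i ^ r * 1 ≤
      (∑ i ∈ S, (f i ^ r) ^ P) ^ (1/P) * (∑ i ∈ S, (1:ℝ) ^ (P/(P-1))) ^ (1/(P/(P-1))) :=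
    Real.inner_le_Lp_mul_Lq_of_nonneg S hQ (fun i _ => Real.rpow_nonneg (hf i) r)
      (fun i _ => zero_le_one)
  simp only [mul_one, Real.one_rpow, Finset.sum_const, nsmul_eq_mul] at key
  have h1 : ∀ i ∈ S, (f i ^ r) ^ P = f i ^ t := by
    intro i _
    rw [← Real.rpow_mul (hf i), hP, mul_div_cancel₀ _ hr.ne']
  rw [Finset.sum_congr rfl h1] at key
  have hsum_nonneg : (0:ℝ) ≤ ∑ i ∈ S, f i ^ r :=
    Finset.sum_nonneg fun i _ => Real.rpow_nonneg (hf i) r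
  have h2 := Real.rpow_le_rpow hsum_nonneg key (by positivity : (0:ℝ) ≤ 1/r)
  refine h2.trans (le_of_eq ?_)
  rw [Real.mul_rpow (Real.rpow_nonneg (Finset.sum_nonneg fun i _ => Real.rpow_nonneg (hf i) t) _)
    (Real.rpow_nonneg (Nat.cast_nonneg _) _),
    ← Real.rpow_mul (Finset.sum_nonneg fun i _ => Real.rpow_nonneg (hf i) t),
    ← Real.rpow_mul (by positivity : (0:ℝ) ≤ (S.card : ℝ))]
  rw [mul_comm]
  have hrne : r ≠ 0 := hr.ne'
  have htne : t ≠ 0 := ht.ne'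
  have htr : t - r ≠ 0 := (sub_pos.2 h).ne'
  have hPm : t/r - 1 ≠ 0 := by
    rw [div_sub_one hrne]; exact div_ne_zero htr hrne
  have e1 : (1:ℝ)/P * (1/r) = 1/t := by rw [hP]; field_simp
  have e2 : (1:ℝ)/(P/(P-1)) * (1/r) = 1/r - 1/t := by
    rw [hP]
    field_simp
  rw [e1, e2]
open Finset in
lemma exists_max_set {n s : ℕ} (f : Fin n → ℝ) (hf : ∀ i, 0 ≤ f i) :
    ∃ S : Finset (Fin n), S.card = min s n ∧
      (∀ S' : Finset (Fin n), S'.card ≤ s → ∑ i ∈ S', f i ≤ ∑ i ∈ S, f i) ∧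
      (∀ i ∉ S, ∀ j ∈ S, f i ≤ f j) := by
  classical
  set k := min s n with hk
  have hkn : k ≤ n := min_le_right _ _
  obtain ⟨S0, _, hS0⟩ := Finset.exists_subset_card_eq
    (show k ≤ (Finset.univ : Finset (Fin n)).card by simpa using hkn)
  set 𝒮 : Finset (Finset (Fin n)) := Finset.univ.filter (fun S => S.card = k) with h𝒮
  have hne : 𝒮.Nonempty := ⟨S0, by simp [h𝒮, hS0]⟩
  obtain ⟨S, hSmem, hSmax⟩ := Finset.exists_max_image 𝒮 (fun S => ∑ i ∈ S, f i) hne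
  have hScard : S.card = k := by simpa [h𝒮] using hSmem
  refine ⟨S, hScard, ?_, ?_⟩
  · intro S' hS'
    have h1 : S'.card ≤ k := le_min hS' (by simpa using S'.card_le_univ)
    obtain ⟨S'', hsub, hcard⟩ := Finset.exists_superset_card_eq h1 (by simpa using hkn)
    calc ∑ i ∈ S', f i ≤ ∑ i ∈ S'', f i :=
          Finset.sum_le_sum_of_subset_of_nonneg hsub (fun i _ _ => hf i)
      _ ≤ ∑ i ∈ S, f i := hSmax S'' (by simp [h𝒮, hcard])
  · intro i hi j hj
    have hne2 : i ∉ S.erase j := fun h => hi (Finset.mem_of_mem_erase h)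
    have h1 : 1 ≤ S.card := Finset.card_pos.2 ⟨j, hj⟩
    have hcard : (insert i (S.erase j)).card = k := by
      rw [Finset.card_insert_of_notMem hne2, Finset.card_erase_of_mem hj]
      omega
    have h2 := hSmax (insert i (S.erase j)) (by simp [h𝒮, hcard])
    rw [Finset.sum_insert hne2] at h2
    have h3 : ∑ x ∈ S.erase j, f x + f j = ∑ x ∈ S, f x := Finset.sum_erase_add S f hj
    linarith
open Finset in
lemma bestApprox1_ge {n s : ℕ} (w : Fin n → ℂ) (S : Finset (Fin n)) (_hcard : S.card ≤ s)
    (hmax : ∀ S' : Finset (Fin n), S'.card ≤ s → ∑ i ∈ S', ‖w i‖ ≤ ∑ i ∈ S, ‖w i‖) :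
    ∑ i ∈ Sᶜ, ‖w i‖ ≤ bestApprox1 s w := by
  apply le_csInf
  · exact ⟨lpNorm 1 (w - 0), ⟨0, ⟨∅, by simp⟩, rfl⟩⟩
  · rintro y ⟨w', ⟨S', hS'card, hS'supp⟩, rfl⟩
    simp only [lp1_eq]
    calc ∑ i ∈ Sᶜ, ‖w i‖
        = ∑ i, ‖w i‖ - ∑ i ∈ S, ‖w i‖ := by
          rw [← Finset.sum_add_sum_compl S fun i => ‖w i‖]; ring
      _ ≤ ∑ i, ‖w i‖ - ∑ i ∈ S', ‖w i‖ := by linarith [hmax S' hS'card]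
      _ = ∑ i ∈ S'ᶜ, ‖w i‖ := by
          rw [← Finset.sum_add_sum_compl S' fun i => ‖w i‖]; ring
      _ = ∑ i ∈ S'ᶜ, ‖(w - w') i‖ := Finset.sum_congr rfl fun i hi => by
          simp [hS'supp i (Finset.mem_compl.mp hi)]
      _ ≤ ∑ i, ‖(w - w') i‖ :=
          Finset.sum_le_sum_of_subset_of_nonneg (Finset.subset_univ _)
            (fun i _ _ => norm_nonneg _)
lemma rpow_sub_one_mul {x p : ℝ} (hx : 0 ≤ x) (hp : p ≠ 0) : x ^ (p-1) * x = x ^ p := by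
  nth_rewrite 2 [← Real.rpow_one x]
  rw [← Real.rpow_add' hx (by simpa using hp)]
  norm_num

lemma real_rpow_add_rpow_le_add {A B p : ℝ} (hA : 0 ≤ A) (hB : 0 ≤ B) (hp : 1 ≤ p) :
    (A + B) ^ (1/p) ≤ A ^ (1/p) + B ^ (1/p) := by
  have hp0 : p ≠ 0 := by positivity
  lift A to NNReal using hA
  lift B to NNReal using hB
  have e : ∀ C : NNReal, (C ^ (1/p)) ^ p = C := fun C => by
    rw [← NNReal.rpow_mul, one_div_mul_cancel hp0, NNReal.rpow_one]
  have h := NNReal.rpow_add_rpow_le_add (A ^ (1/p)) (B ^ (1/p)) hp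
  rw [e A, e B] at h
  have := NNReal.coe_le_coe.2 h
  push_cast at this
  convert this using 2

/-- Under the `ℓ^q`-RNSP of order `s` with constants `ρ, τ` relative to `‖·‖`, for all
`1 ≤ p ≤ q` and all `z, w ∈ ℂ^N`:
`‖z − w‖_p ≤ (C/s^(1−1/p))(‖z‖₁ − ‖w‖₁ + 2σ_s(w)₁) + (D/s^(1/q−1/p)) ‖A(z−w)‖`,
where `C = (1+ρ)²/(1−ρ)` and `D = (3+ρ)τ/(1−ρ)`. -/
theorem stmt19 {m N : ℕ} (A : Matrix (Fin m) (Fin N) ℂ)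
    (nn : (Fin m → ℂ) → ℝ)
    (nn_add : ∀ x y, nn (x + y) ≤ nn x + nn y)
    (nn_smul : ∀ (c : ℂ) x, nn (c • x) = ‖c‖ * nn x)
    (nn_eq_zero : ∀ x, nn x = 0 ↔ x = 0)
    (q : ℝ) (hq : 1 ≤ q) (s : ℕ) (hs : 1 ≤ s)
    (ρ τ : ℝ) (hρ0 : 0 < ρ) (hρ1 : ρ < 1) (hτ : 0 < τ)
    (hNSP : RNSP A nn q s ρ τ)
    (p : ℝ) (hp1 : 1 ≤ p) (hpq : p ≤ q)
    (z w : Fin N → ℂ) :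
    lpNorm p (z - w) ≤
      (1 + ρ) ^ 2 / (1 - ρ) / (s : ℝ) ^ ((1 : ℝ) - 1 / p)
          * (lpNorm 1 z - lpNorm 1 w + 2 * bestApprox1 s w)
      + (3 + ρ) * τ / (1 - ρ) / (s : ℝ) ^ ((1 : ℝ) / q - 1 / p)
          * nn (A.mulVec (z - w)) := by
  classical
  set v := z - w with hv
  set E := nn (A.mulVec (z - w)) with hEdef
  have hq0 : (0:ℝ) < q := lt_of_lt_of_le one_pos hq
  have hp0 : (0:ℝ) < p := lt_of_lt_of_le one_pos hp1
  have ht : (1:ℝ) ≤ (s:ℝ) := by exact_mod_cast hs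
  have ht0 : (0:ℝ) < (s:ℝ) := lt_of_lt_of_le one_pos ht
  have hvz : ∀ i, v i = z i - w i := fun i => rfl
  -- E is nonnegative
  have hEnn : 0 ≤ E := by
    have h0 : nn 0 = 0 := (nn_eq_zero 0).2 rfl
    have h1 : nn (-(A.mulVec (z - w))) = nn (A.mulVec (z - w)) := by
      have := nn_smul (-1 : ℂ) (A.mulVec (z - w))
      simpa using this
    have h2 := nn_add (A.mulVec (z - w)) (-(A.mulVec (z - w)))
    rw [add_neg_cancel, h0, h1] at h2
    rw [hEdef]; linarith
  -- Step 1 : ℓ¹ consequence of RNSP on any small set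
  have step1 : ∀ S : Finset (Fin N), S.card ≤ s →
      ∑ i ∈ S, ‖v i‖ ≤ ρ * ∑ i ∈ Sᶜ, ‖v i‖ + (s:ℝ)^(1 - 1/q) * τ * E := by
    intro S hS
    have h2 := holder_card S (fun i => ‖v i‖) (fun i => norm_nonneg _) one_pos hq
    have h3 : ((S.card:ℝ))^(1 - 1/q) ≤ (s:ℝ)^(1 - 1/q) := by
      apply Real.rpow_le_rpow (Nat.cast_nonneg _) (by exact_mod_cast hS)
      have : 1/q ≤ 1 := by
        rw [div_le_one hq0]; exact hq
      linarith
    have h5 := hNSP S hS v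
    rw [lp_restrict S v hq0.ne', lp1_restrict] at h5
    have hq5rhs : (0:ℝ) ≤ ∑ i ∈ S, ‖v i‖ ^ q :=
      Finset.sum_nonneg fun i _ => Real.rpow_nonneg (norm_nonneg _) _
    have e : (s:ℝ)^(1-1/q) * (s:ℝ)^(1/q-1) = 1 := by
      rw [← Real.rpow_add ht0]; norm_num
    calc ∑ i ∈ S, ‖v i‖
        ≤ (S.card:ℝ)^(1 - 1/q) * (∑ i ∈ S, ‖v i‖^q)^(1/q) := by
          have : ∑ i ∈ S, ‖v i‖ = (∑ i ∈ S, ‖v i‖ ^ (1:ℝ)) ^ (1/(1:ℝ)) := by simp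
          rw [this]
          simpa using h2
      _ ≤ (s:ℝ)^(1-1/q) * (∑ i ∈ S, ‖v i‖^q)^(1/q) :=
          mul_le_mul_of_nonneg_right h3 (Real.rpow_nonneg hq5rhs _)
      _ ≤ (s:ℝ)^(1-1/q) * ((s:ℝ)^(1/q-1) * ρ * ∑ i ∈ Sᶜ, ‖v i‖ + τ * E) :=
          mul_le_mul_of_nonneg_left h5 (Real.rpow_nonneg ht0.le _)
      _ = ρ * ∑ i ∈ Sᶜ, ‖v i‖ + (s:ℝ)^(1 - 1/q) * τ * E := by
          linear_combination (ρ * ∑ i ∈ Sᶜ, ‖v i‖) * e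
  -- Step 2 : ℓ¹ error bound via the best s-term support of w
  obtain ⟨Sw, hSwcard, hSwmax, _⟩ := exists_max_set (fun i => ‖w i‖) (fun i => norm_nonneg _)
  have hSwle : Sw.card ≤ s := by rw [hSwcard]; exact min_le_left s N
  set σ := bestApprox1 s w with hσdef
  have hσ : ∑ i ∈ Swᶜ, ‖w i‖ ≤ σ := bestApprox1_ge w Sw hSwle hSwmax
  set Δ := lpNorm 1 z - lpNorm 1 w + 2 * σ with hΔdef
  set n1 := lpNorm 1 v with hn1def
  have hn1e : n1 = ∑ i, ‖v i‖ := lp1_eq v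
  have hn1nn : 0 ≤ n1 := by
    rw [hn1e]; exact Finset.sum_nonneg fun i _ => norm_nonneg _
  have hT : 0 ≤ (s:ℝ)^(1-1/q) * τ * E :=
    mul_nonneg (mul_nonneg (Real.rpow_nonneg ht0.le _) hτ.le) hEnn
  have hn1bound : (1 - ρ) * n1 ≤ (1+ρ) * Δ + 2 * ((s:ℝ)^(1-1/q) * τ * E) := by
    have hab := step1 Sw hSwle
    have hzsplit : ∑ i ∈ Sw, ‖z i‖ + ∑ i ∈ Swᶜ, ‖z i‖ = lpNorm 1 z := by
      rw [lp1_eq]; exact Finset.sum_add_sum_compl _ _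
    have hwsplit : ∑ i ∈ Sw, ‖w i‖ + ∑ i ∈ Swᶜ, ‖w i‖ = lpNorm 1 w := by
      rw [lp1_eq]; exact Finset.sum_add_sum_compl _ _
    have hvsplit : ∑ i ∈ Sw, ‖v i‖ + ∑ i ∈ Swᶜ, ‖v i‖ = n1 := by
      rw [hn1e]; exact Finset.sum_add_sum_compl _ _
    have hb1 : ∑ i ∈ Swᶜ, ‖v i‖ ≤ ∑ i ∈ Swᶜ, ‖z i‖ + ∑ i ∈ Swᶜ, ‖w i‖ := by
      rw [← Finset.sum_add_distrib]
      exact Finset.sum_le_sum fun i _ => by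
        rw [hvz i]; exact norm_sub_le (z i) (w i)
    have hb2 : ∑ i ∈ Sw, ‖w i‖ ≤ ∑ i ∈ Sw, ‖z i‖ + ∑ i ∈ Sw, ‖v i‖ := by
      rw [← Finset.sum_add_distrib]
      refine Finset.sum_le_sum fun i _ => ?_
      rw [hvz i]
      calc ‖w i‖ = ‖z i - (z i - w i)‖ := by rw [sub_sub_cancel]
        _ ≤ ‖z i‖ + ‖z i - w i‖ := norm_sub_le _ _
    nlinarith [hab, hσ, hρ1, mul_le_mul_of_nonneg_left hab (by linarith : (0:ℝ) ≤ 1 + ρ)]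
  -- Step 3 : ℓᵖ bound via the largest entries of v
  obtain ⟨Sv, hSvcard, hSvmax, hSvpt⟩ := exists_max_set (fun i => ‖v i‖) (fun i => norm_nonneg _)
  have hSvle : Sv.card ≤ s := by rw [hSvcard]; exact min_le_left s N
  have hpt : ∀ i ∉ Sv, (s:ℝ) * ‖v i‖ ≤ n1 := by
    intro i hi
    rcases le_or_gt s N with hsN | hsN
    · have hcard : Sv.card = s := by rw [hSvcard]; exact min_eq_left hsN
      have h1 : ∑ _j ∈ Sv, ‖v i‖ ≤ ∑ j ∈ Sv, ‖v j‖ :=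
        Finset.sum_le_sum fun j hj => hSvpt i hi j hj
      rw [Finset.sum_const, hcard, nsmul_eq_mul] at h1
      refine h1.trans ?_
      rw [hn1e]
      exact Finset.sum_le_sum_of_subset_of_nonneg (Finset.subset_univ _)
        fun _ _ _ => norm_nonneg _
    · exfalso
      have hu : Sv = Finset.univ := by
        apply Finset.eq_univ_of_card
        rw [hSvcard, Fintype.card_fin]
        exact min_eq_right hsN.le
      exact hi (hu ▸ Finset.mem_univ i)
  have hcomplle : ∑ i ∈ Svᶜ, ‖v i‖ ≤ n1 := by
    rw [hn1e]
    exact Finset.sum_le_sum_of_subset_of_nonneg (Finset.subset_univ _)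
      fun _ _ _ => norm_nonneg _
  -- Stechkin-type bound
  have hstech : (∑ i ∈ Svᶜ, ‖v i‖ ^ p) ^ (1/p) ≤ (s:ℝ)^(1/p - 1) * n1 := by
    have h1 : ∀ i ∈ Svᶜ, ‖v i‖ ^ p ≤ (n1/(s:ℝ)) ^ (p-1) * ‖v i‖ := by
      intro i hi
      have hle : ‖v i‖ ≤ n1/(s:ℝ) := by
        rw [le_div_iff₀ ht0, mul_comm]
        exact hpt i (Finset.mem_compl.mp hi)
      calc ‖v i‖ ^ p = ‖v i‖ ^ (p-1) * ‖v i‖ := (rpow_sub_one_mul (norm_nonneg _) hp0.ne').symm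
        _ ≤ (n1/(s:ℝ))^(p-1) * ‖v i‖ :=
            mul_le_mul_of_nonneg_right
              (Real.rpow_le_rpow (norm_nonneg _) hle (by linarith)) (norm_nonneg _)
    have h2 : ∑ i ∈ Svᶜ, ‖v i‖ ^ p ≤ (n1/(s:ℝ))^(p-1) * n1 := by
      calc ∑ i ∈ Svᶜ, ‖v i‖^p ≤ ∑ i ∈ Svᶜ, (n1/(s:ℝ))^(p-1) * ‖v i‖ := Finset.sum_le_sum h1
        _ = (n1/(s:ℝ))^(p-1) * ∑ i ∈ Svᶜ, ‖v i‖ := by rw [Finset.mul_sum]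
        _ ≤ (n1/(s:ℝ))^(p-1) * n1 :=
            mul_le_mul_of_nonneg_left hcomplle (Real.rpow_nonneg (by positivity) _)
    have h3 := Real.rpow_le_rpow
      (Finset.sum_nonneg fun i _ => Real.rpow_nonneg (norm_nonneg _) _) h2
      (by positivity : (0:ℝ) ≤ 1/p)
    refine h3.trans (le_of_eq ?_)
    rcases eq_or_lt_of_le hn1nn with h0 | h0
    · rw [← h0, mul_zero, Real.zero_rpow (one_div_ne_zero hp0.ne'), mul_zero]
    · have e1 : (n1/(s:ℝ))^(p-1) * n1 = n1 ^ p * (s:ℝ)^(1-p) := by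
        rw [Real.div_rpow hn1nn ht0.le, div_mul_eq_mul_div, rpow_sub_one_mul hn1nn hp0.ne',
          div_eq_mul_inv, ← Real.rpow_neg ht0.le, neg_sub]
      rw [e1, Real.mul_rpow (Real.rpow_nonneg hn1nn _) (Real.rpow_nonneg ht0.le _),
        ← Real.rpow_mul hn1nn, ← Real.rpow_mul ht0.le,
        mul_one_div_cancel hp0.ne', Real.rpow_one]
      have e2 : (1-p)*(1/p) = 1/p - 1 := by field_simp
      rw [e2, mul_comm]
  -- ℓᵖ bound on the Sv part
  have hSvbd : (∑ i ∈ Sv, ‖v i‖ ^ p) ^ (1/p) ≤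
      (s:ℝ)^(1/p-1) * ρ * n1 + (s:ℝ)^(1/p-1/q) * τ * E := by
    have h2 := holder_card Sv (fun i => ‖v i‖) (fun i => norm_nonneg _) hp0 hpq
    have hexp : (0:ℝ) ≤ 1/p - 1/q := by
      have : 1/q ≤ 1/p := one_div_le_one_div_of_le hp0 hpq
      linarith
    have h3 : ((Sv.card:ℝ))^(1/p - 1/q) ≤ (s:ℝ)^(1/p-1/q) :=
      Real.rpow_le_rpow (Nat.cast_nonneg _) (by exact_mod_cast hSvle) hexp
    have h5 := hNSP Sv hSvle v
    rw [lp_restrict Sv v hq0.ne', lp1_restrict] at h5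
    have hq5rhs : (0:ℝ) ≤ ∑ i ∈ Sv, ‖v i‖ ^ q :=
      Finset.sum_nonneg fun i _ => Real.rpow_nonneg (norm_nonneg _) _
    have h6 : (s:ℝ)^(1/q-1) * ρ * ∑ i ∈ Svᶜ, ‖v i‖ + τ * E ≤
        (s:ℝ)^(1/q-1) * ρ * n1 + τ * E := by
      have := mul_le_mul_of_nonneg_left hcomplle
        (by positivity : (0:ℝ) ≤ (s:ℝ)^(1/q-1) * ρ)
      linarith
    have e : (s:ℝ)^(1/p-1/q) * (s:ℝ)^(1/q-1) = (s:ℝ)^(1/p-1) := by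
      rw [← Real.rpow_add ht0]; ring_nf
    calc (∑ i ∈ Sv, ‖v i‖^p)^(1/p)
        ≤ (Sv.card:ℝ)^(1/p-1/q) * (∑ i ∈ Sv, ‖v i‖^q)^(1/q) := h2
      _ ≤ (s:ℝ)^(1/p-1/q) * (∑ i ∈ Sv, ‖v i‖^q)^(1/q) :=
          mul_le_mul_of_nonneg_right h3 (Real.rpow_nonneg hq5rhs _)
      _ ≤ (s:ℝ)^(1/p-1/q) * ((s:ℝ)^(1/q-1) * ρ * n1 + τ * E) :=
          mul_le_mul_of_nonneg_left (h5.trans h6) (Real.rpow_nonneg ht0.le _)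
      _ = (s:ℝ)^(1/p-1) * ρ * n1 + (s:ℝ)^(1/p-1/q) * τ * E := by
          linear_combination (ρ * n1) * e
  -- splitting the ℓᵖ norm
  have hsplit : lpNorm p v ≤
      (∑ i ∈ Sv, ‖v i‖ ^ p) ^ (1/p) + (∑ i ∈ Svᶜ, ‖v i‖ ^ p) ^ (1/p) := by
    have hsum : lpNorm p v = (∑ i ∈ Sv, ‖v i‖ ^ p + ∑ i ∈ Svᶜ, ‖v i‖ ^ p) ^ (1/p) := by
      rw [lpNorm, Finset.sum_add_sum_compl]
    rw [hsum]
    exact real_rpow_add_rpow_le_add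
      (Finset.sum_nonneg fun i _ => Real.rpow_nonneg (norm_nonneg _) _)
      (Finset.sum_nonneg fun i _ => Real.rpow_nonneg (norm_nonneg _) _) hp1
  have hfin : lpNorm p v ≤ (s:ℝ)^(1/p-1) * (1+ρ) * n1 + (s:ℝ)^(1/p-1/q) * τ * E := by
    have := hsplit.trans (add_le_add hSvbd hstech)
    linarith
  -- final assembly
  set D1 := (s:ℝ) ^ ((1:ℝ) - 1/p) with hD1
  set D2 := (s:ℝ) ^ ((1:ℝ)/q - 1/p) with hD2
  have hd1 : (0:ℝ) < D1 := Real.rpow_pos_of_pos ht0 _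
  have hd2 : (0:ℝ) < D2 := Real.rpow_pos_of_pos ht0 _
  have hX1 : (s:ℝ)^(1/p-1) = D1⁻¹ := by
    rw [hD1, ← Real.rpow_neg ht0.le]; congr 1; ring
  have hX2 : (s:ℝ)^(1/p-1/q) = D2⁻¹ := by
    rw [hD2, ← Real.rpow_neg ht0.le]; congr 1; ring
  have hX3 : (s:ℝ)^(1-1/q) = D1 / D2 := by
    rw [hD1, hD2, ← Real.rpow_sub ht0]; congr 1; ring
  have h1ρ : (0:ℝ) < 1 - ρ := by linarith
  have hn1le : n1 ≤ ((1+ρ) * Δ + 2 * ((s:ℝ)^(1-1/q) * τ * E)) / (1 - ρ) := by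
    rw [le_div_iff₀ h1ρ, mul_comm]
    exact hn1bound
  calc lpNorm p v
      ≤ (s:ℝ)^(1/p-1) * (1+ρ) * n1 + (s:ℝ)^(1/p-1/q) * τ * E := hfin
    _ ≤ (s:ℝ)^(1/p-1) * (1+ρ) * (((1+ρ) * Δ + 2 * ((s:ℝ)^(1-1/q) * τ * E)) / (1 - ρ))
          + (s:ℝ)^(1/p-1/q) * τ * E := by
        have := mul_le_mul_of_nonneg_left hn1le
          (by positivity : (0:ℝ) ≤ (s:ℝ)^(1/p-1) * (1+ρ))
        linarith
    _ = (1 + ρ) ^ 2 / (1 - ρ) / D1 * Δ + (3 + ρ) * τ / (1 - ρ) / D2 * E := by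
        rw [hX1, hX2, hX3]
        field_simp
        ring
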